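/- Let A be a nonnegative bounded linear operator on L²(X) with A^r = A (r ≥ 2), and let e₁, …, e_N be a basis of the range of A consisting of nonnegative functions with pairwise essentially disjoint supports. Then for each i there is a unique index j and a scalar α > 0 with A eᵢ = α eⱼ (A permutes the one-dimensional spans of the basis functions up to positive scalars). -/

import Mathlib

open MeasureTheory

lemma lp_coeFn_sum {X : Type*} [MeasurableSpace X] {μ : Measure X}
    {N : ℕ} (f : Fin N → Lp ℝ 2 μ) (s : Finset (Fin N)) :
    (⇑(∑ k ∈ s, f k) : X → ℝ) =ᵐ[μ] fun x => ∑ k ∈ s, (f k : X → ℝ) x := by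
  classical
  induction s using Finset.induction with
  | empty => simp only [Finset.sum_empty]; exact Lp.coeFn_zero (E := ℝ) (p := 2) (μ := μ)
  | @insert a s ha ih =>
    rw [Finset.sum_insert ha]
    filter_upwards [Lp.coeFn_add (f a) (∑ k ∈ s, f k), ih] with x h1 h2
    simp only [h1, Pi.add_apply, h2, Finset.sum_insert ha]

lemma coeff_nonneg {X : Type*} [MeasurableSpace X] {μ : Measure X}
    {N : ℕ} {e : Fin N → Lp ℝ 2 μ}
    (he0 : ∀ i, 0 ≤ e i) (hne : ∀ i, e i ≠ 0)
    (hdisj : ∀ i j, i ≠ j →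
      μ (Function.support (e i : X → ℝ) ∩ Function.support (e j : X → ℝ)) = 0)
    (c : Fin N → ℝ) (h : 0 ≤ ∑ k, c k • e k) : ∀ j, 0 ≤ c j := by
  classical
  intro j
  by_contra hcj
  push_neg at hcj
  have hsum1 : (⇑(∑ k, c k • e k) : X → ℝ) =ᵐ[μ] fun x => ∑ k, c k * (e k : X → ℝ) x := by
    refine (lp_coeFn_sum (fun k => c k • e k) Finset.univ).trans ?_
    have : ∀ k : Fin N, (⇑(c k • e k) : X → ℝ) =ᵐ[μ] fun x => c k * (e k : X → ℝ) x :=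
      fun k => Lp.coeFn_smul (c k) (e k)
    filter_upwards [ae_all_iff.2 this] with x hx
    simp only [hx]
  have hpos' : (0 : X → ℝ) ≤ᵐ[μ] ⇑(∑ k, c k • e k) := (Lp.coeFn_nonneg _).2 h
  have hek : ∀ᵐ x ∂μ, ∀ k, 0 ≤ (e k : X → ℝ) x :=
    ae_all_iff.2 fun k => (Lp.coeFn_nonneg _).2 (he0 k)
  have hd : ∀ᵐ x ∂μ, ∀ k, k ≠ j →
      ¬ (x ∈ Function.support (e j : X → ℝ) ∩ Function.support (e k : X → ℝ)) := by
    refine ae_all_iff.2 fun k => ?_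
    by_cases hk : k = j
    · exact Filter.Eventually.of_forall fun x h' => absurd hk h'
    · have := measure_eq_zero_iff_ae_notMem.1 (hdisj j k (Ne.symm hk))
      filter_upwards [this] with x hx _ ; exact hx
  have key : ∀ᵐ x ∂μ, (e j : X → ℝ) x = 0 := by
    filter_upwards [hsum1, hpos', hek, hd] with x hs hp hk hdx
    by_contra h0
    have hxj : x ∈ Function.support (e j : X → ℝ) := h0
    have hz : ∀ k, k ≠ j → (e k : X → ℝ) x = 0 := by
      intro k hkj
      by_contra hz
      exact hdx k hkj ⟨hxj, hz⟩
    have hsum2 : ∑ k, c k * (e k : X → ℝ) x = c j * (e j : X → ℝ) x := by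
      refine Finset.sum_eq_single j (fun k _ hkj => by rw [hz k hkj, mul_zero]) (by simp)
    have hp' : 0 ≤ c j * (e j : X → ℝ) x := by
      have := hp
      simp only [Pi.zero_apply] at this
      rw [hs, hsum2] at this
      exact this
    have hej : 0 < (e j : X → ℝ) x := lt_of_le_of_ne (hk j) (Ne.symm h0)
    nlinarith
  exact hne j (Lp.eq_zero_iff_ae_eq_zero.2 key)

lemma matrix_monomial {N : ℕ} (B C : Matrix (Fin N) (Fin N) ℝ)
    (hB : ∀ i j, 0 ≤ B i j) (hC : ∀ i j, 0 ≤ C i j)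
    (hBC : B * C = 1) (hCB : C * B = 1) (i : Fin N) :
    ∃ j, 0 < B j i ∧ ∀ j', B j' i ≠ 0 → j' = j := by
  classical
  have exPos : ∀ (D E : Matrix (Fin N) (Fin N) ℝ), (∀ a b, 0 ≤ D a b) → (∀ a b, 0 ≤ E a b) →
      ∀ a b, (D * E) a b = 1 → ∃ k, 0 < D a k ∧ 0 < E k b := by
    intro D E hD hE a b hab
    rw [Matrix.mul_apply] at hab
    by_contra hno
    push_neg at hno
    have hz : ∀ k ∈ Finset.univ, D a k * E k b = 0 := by
      intro k _
      rcases lt_or_eq_of_le (hD a k) with h1 | h1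
      · rcases lt_or_eq_of_le (hE k b) with h2 | h2
        · exact absurd h2 (not_lt.2 (hno k h1))
        · rw [← h2, mul_zero]
      · rw [← h1, zero_mul]
    rw [Finset.sum_eq_zero hz] at hab
    norm_num at hab
  obtain ⟨k, hCik, hBki⟩ := exPos C B hC hB i i (by rw [hCB]; simp)
  refine ⟨k, hBki, ?_⟩
  intro k' hk'
  by_contra hkk
  have hBk'i : 0 < B k' i := lt_of_le_of_ne (hB k' i) (Ne.symm hk')
  obtain ⟨m, hBk'm, hCmk'⟩ := exPos B C hB hC k' k' (by rw [hBC]; simp)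
  have h1 : 0 < (C * B) m i := by
    rw [Matrix.mul_apply]
    have hle : C m k' * B k' i ≤ ∑ l, C m l * B l i :=
      Finset.single_le_sum (fun l _ => mul_nonneg (hC m l) (hB l i)) (Finset.mem_univ k')
    exact lt_of_lt_of_le (mul_pos hCmk' hBk'i) hle
  have hmi : m = i := by
    by_contra hmi
    rw [hCB, Matrix.one_apply_ne hmi] at h1
    exact lt_irrefl 0 h1
  subst hmi
  have h2 : 0 < (B * C) k k' := by
    rw [Matrix.mul_apply]
    have hle : B k m * C m k' ≤ ∑ l, B k l * C l k' :=
      Finset.single_le_sum (fun l _ => mul_nonneg (hB k l) (hC l k')) (Finset.mem_univ m)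
    exact lt_of_lt_of_le (mul_pos hBki hCmk') hle
  rw [hBC, Matrix.one_apply_ne (Ne.symm hkk)] at h2
  exact lt_irrefl 0 h2

theorem stmt14 {X : Type*} [MeasurableSpace X] (μ : Measure X) [IsFiniteMeasure μ]
    (A : Lp ℝ 2 μ →L[ℝ] Lp ℝ 2 μ)
    (hpos : ∀ f : Lp ℝ 2 μ, 0 ≤ f → 0 ≤ A f)
    (r : ℕ) (hr : 2 ≤ r) (hpot : A ^ r = A)
    (N : ℕ) (e : Fin N → Lp ℝ 2 μ)
    (hmem : ∀ i, e i ∈ Set.range A)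
    (he0 : ∀ i, 0 ≤ e i) (hne : ∀ i, e i ≠ 0)
    (hdisj : ∀ i j, i ≠ j →
      μ (Function.support (e i : X → ℝ) ∩ Function.support (e j : X → ℝ)) = 0)
    (hli : LinearIndependent ℝ e)
    (hspan : Submodule.span ℝ (Set.range e) =
      LinearMap.range (A : Lp ℝ 2 μ →ₗ[ℝ] Lp ℝ 2 μ)) :
    ∀ i, ∃ j : Fin N, ∃ α : ℝ, 0 < α ∧ A (e i) = α • e j ∧
      ∀ (j' : Fin N) (α' : ℝ), 0 < α' → A (e i) = α' • e j' → j' = j ∧ α' = α := by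
  classical
  have hmapsto : ∀ x ∈ Submodule.span ℝ (Set.range e), A x ∈ Submodule.span ℝ (Set.range e) := by
    intro x _
    rw [hspan]
    exact ⟨x, rfl⟩
  set V : Submodule ℝ (Lp ℝ 2 μ) := Submodule.span ℝ (Set.range e) with hV
  let b : Module.Basis (Fin N) ℝ V := Module.Basis.span hli
  have hb : ∀ i, (b i : Lp ℝ 2 μ) = e i := fun i => congrArg Subtype.val (Module.Basis.span_apply hli i)
  let A' : V →ₗ[ℝ] V := (A : Lp ℝ 2 μ →ₗ[ℝ] Lp ℝ 2 μ).restrict hmapsto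
  have hA' : ∀ v : V, (A' v : Lp ℝ 2 μ) = A (v : Lp ℝ 2 μ) := fun v => rfl
  have hApow : ∀ (k : ℕ) (v : V), ((A' ^ k) v : Lp ℝ 2 μ) = (A ^ k) (v : Lp ℝ 2 μ) := by
    intro k
    induction k with
    | zero => intro v; simp
    | succ n ih =>
      intro v
      rw [pow_succ, pow_succ, Module.End.mul_apply, ContinuousLinearMap.mul_apply,
        ih (A' v), hA' v]
  -- A'^(r-1) = id
  have hid : A' ^ (r - 1) = LinearMap.id := by
    apply LinearMap.ext
    intro v
    apply Subtype.ext
    rw [LinearMap.id_coe, id_eq, hApow]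
    obtain ⟨w, hw⟩ : ∃ w, A w = (v : Lp ℝ 2 μ) := by
      exact hspan.le v.2
    have hrw : (A ^ (r - 1)) (A w) = (A ^ r) w := by
      rw [← ContinuousLinearMap.mul_apply, ← pow_succ]
      have h1 : r - 1 + 1 = r := by omega
      rw [h1]
    rw [← hw, hrw, hpot, hw]
  set M : Matrix (Fin N) (Fin N) ℝ := LinearMap.toMatrixAlgEquiv b A' with hM
  have hMpow : M ^ (r - 1) = 1 := by
    rw [hM, ← map_pow, hid]
    have : (LinearMap.id : V →ₗ[ℝ] V) = 1 := rfl
    rw [this, map_one]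
  -- representation lemma
  have hrep : ∀ v : V, (v : Lp ℝ 2 μ) = ∑ j, b.repr v j • e j := by
    intro v
    conv_lhs => rw [← b.sum_repr v]
    rw [AddSubmonoidClass.coe_finset_sum]
    exact Finset.sum_congr rfl fun j _ => by rw [SetLike.val_smul, hb]
  -- A (e i) in terms of the matrix M
  have hAe : ∀ i, A (e i) = ∑ l, M l i • e l := by
    intro i
    have h1 : A (e i) = ((A' (b i) : V) : Lp ℝ 2 μ) := by rw [hA', hb]
    rw [h1, hrep (A' (b i))]
    exact Finset.sum_congr rfl fun l _ => by
      rw [hM, LinearMap.toMatrixAlgEquiv_apply]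
  -- entries of M are nonnegative
  have hMnn : ∀ a c, 0 ≤ M a c := by
    intro a c
    have h1 : (0 : Lp ℝ 2 μ) ≤ ∑ l, M l c • e l := by
      rw [← hAe c]
      exact hpos _ (he0 c)
    exact coeff_nonneg he0 hne hdisj _ h1 a
  -- entries of powers of M are nonnegative
  have hMknn : ∀ k a c, 0 ≤ (M ^ k) a c := by
    intro k
    induction k with
    | zero =>
      intro a c
      rw [pow_zero]
      by_cases h : a = c
      · rw [h, Matrix.one_apply_eq]; norm_num
      · rw [Matrix.one_apply_ne h]
    | succ n ih =>
      intro a c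
      rw [pow_succ, Matrix.mul_apply]
      exact Finset.sum_nonneg fun l _ => mul_nonneg (ih a l) (hMnn l c)
  have hBC : M * M ^ (r - 2) = 1 := by
    rw [← pow_succ']
    have h1 : r - 2 + 1 = r - 1 := by omega
    rw [h1, hMpow]
  have hCB : M ^ (r - 2) * M = 1 := by
    rw [← pow_succ]
    have h1 : r - 2 + 1 = r - 1 := by omega
    rw [h1, hMpow]
  intro i
  obtain ⟨j, hjpos, hjuniq⟩ := matrix_monomial M (M ^ (r - 2)) hMnn (hMknn _) hBC hCB i
  have hAei : A (e i) = M j i • e j := by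
    rw [hAe i]
    refine Finset.sum_eq_single j ?_ (by simp)
    intro l _ hlj
    have : M l i = 0 := by
      by_contra h0
      exact hlj (hjuniq l h0)
    rw [this, zero_smul]
  refine ⟨j, M j i, hjpos, hAei, ?_⟩
  intro j' α' hα' hj'
  have heq2 : α' • e j' = M j i • e j := by rw [← hj', hAei]
  set g : Fin N → ℝ := fun k =>
    (if k = j' then α' else 0) - (if k = j then M j i else 0) with hg
  have hgsum : ∑ k, g k • e k = 0 := by
    simp only [hg, sub_smul, Finset.sum_sub_distrib, ite_smul, zero_smul,
      Finset.sum_ite_eq', Finset.mem_univ, if_true]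
    rw [heq2, sub_self]
  have hall := Fintype.linearIndependent_iff.1 hli g hgsum
  have hjj : j' = j := by
    by_contra hjj
    have := hall j'
    simp only [hg, if_pos rfl, if_neg hjj, sub_zero] at this
    exact hα'.ne' this
  subst hjj
  refine ⟨rfl, ?_⟩
  have h2 : α' - M j' i = 0 := by simpa [hg] using hall j'
  linarith
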